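/- arXiv:2003.13308 — 2 statements merged into one kernel-verified Lean document; each statement's English description precedes it below -/
import Mathlib

section
/- Let P, Q be Laurent polynomials on (ℂ*)^n that are quasi-homogeneous with respect to a weight u ∈ ℤ^n with degrees d_P ≠ d_Q, and suppose additionally that the gradient of P does not vanish on P^{-1}(0) \ Q^{-1}(0) in (ℂ*)^n. Then g = P/Q has no critical points on (ℂ*)^n \ Q^{-1}(0); in particular g(Sing g) = ∅. -/
/-- Evaluation of the Laurent polynomial with (finitely supported) coefficient
function `A : (Fin n → ℤ) →₀ ℂ` at a point `z` of the torus `(ℂ*)ⁿ`. -/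
noncomputable def levalL {n : ℕ} (A : (Fin n → ℤ) →₀ ℂ) (z : Fin n → ℂ) : ℂ :=
  ∑ α ∈ A.support, A α * ∏ i, z i ^ α i

/-- The total derivative of `levalL A` at `z`. -/
noncomputable def lderivCLM {n : ℕ} (A : (Fin n → ℤ) →₀ ℂ) (z : Fin n → ℂ) :
    (Fin n → ℂ) →L[ℂ] ℂ :=
  ∑ α ∈ A.support, A α •
    ∑ i, (∏ k ∈ Finset.univ.erase i, z k ^ α k) •
      (((α i : ℂ) * z i ^ (α i - 1)) •
        ContinuousLinearMap.proj (R := ℂ) (φ := fun _ : Fin n => ℂ) i)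

lemma hasFDerivAt_levalL {n : ℕ} (A : (Fin n → ℤ) →₀ ℂ) (z : Fin n → ℂ)
    (hz : ∀ i, z i ≠ 0) : HasFDerivAt (levalL A) (lderivCLM A z) z := by
  have hmono : ∀ α : Fin n → ℤ, HasFDerivAt (fun w : Fin n → ℂ => ∏ i, w i ^ α i)
      (∑ i, (∏ k ∈ Finset.univ.erase i, z k ^ α k) •
        (((α i : ℂ) * z i ^ (α i - 1)) •
          ContinuousLinearMap.proj (R := ℂ) (φ := fun _ : Fin n => ℂ) i)) z := by
    intro α
    have h : ∀ i ∈ Finset.univ, HasFDerivAt (fun w : Fin n → ℂ => w i ^ α i)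
        (((α i : ℂ) * z i ^ (α i - 1)) •
          ContinuousLinearMap.proj (R := ℂ) (φ := fun _ : Fin n => ℂ) i) z := by
      intro i _
      have hp : HasFDerivAt (fun w : Fin n → ℂ => w i)
          (ContinuousLinearMap.proj (R := ℂ) (φ := fun _ : Fin n => ℂ) i) z :=
        hasFDerivAt_apply i z
      exact (hasDerivAt_zpow (α i) (z i) (Or.inl (hz i))).comp_hasFDerivAt z hp
    exact HasFDerivAt.finset_prod h
  have h : HasFDerivAt (fun w : Fin n → ℂ => ∑ α ∈ A.support, A α * ∏ i, w i ^ α i)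
      (lderivCLM A z) z := by
    exact HasFDerivAt.fun_sum fun α _ => (hmono α).const_mul (A α)
  exact h

lemma lderivCLM_apply_single {n : ℕ} (A : (Fin n → ℤ) →₀ ℂ) (z : Fin n → ℂ) (j : Fin n) :
    lderivCLM A z (Pi.single j 1) =
      ∑ α ∈ A.support, A α *
        ((α j : ℂ) * z j ^ (α j - 1) * ∏ k ∈ Finset.univ.erase j, z k ^ α k) := by
  simp only [lderivCLM, ContinuousLinearMap.sum_apply, ContinuousLinearMap.smul_apply,
    ContinuousLinearMap.proj_apply, smul_eq_mul]
  refine Finset.sum_congr rfl fun α _ => ?_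
  rw [Finset.sum_eq_single_of_mem j (Finset.mem_univ j)]
  · simp [mul_comm, mul_assoc, mul_left_comm]
  · intro i _ hij
    simp [Pi.single_eq_of_ne hij]

lemma euler_identity {n : ℕ} (A : (Fin n → ℤ) →₀ ℂ) (u : Fin n → ℤ) (d : ℤ)
    (hA : ∀ α ∈ A.support, ∑ i, u i * α i = d) (z : Fin n → ℂ) (hz : ∀ i, z i ≠ 0) :
    ∑ j, (u j : ℂ) * z j * lderivCLM A z (Pi.single j 1) = (d : ℂ) * levalL A z := by
  simp only [lderivCLM_apply_single, Finset.mul_sum]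
  rw [Finset.sum_comm]
  rw [levalL, Finset.mul_sum]
  refine Finset.sum_congr rfl fun α hα => ?_
  have key : ∀ j : Fin n, (u j : ℂ) * z j *
      (A α * ((α j : ℂ) * z j ^ (α j - 1) * ∏ k ∈ Finset.univ.erase j, z k ^ α k)) =
      A α * (((u j : ℂ) * (α j : ℂ)) * ∏ k, z k ^ α k) := by
    intro j
    have hzj : z j * z j ^ (α j - 1) = z j ^ α j := by
      rw [zpow_sub_one₀ (hz j), mul_comm (z j), mul_assoc, inv_mul_cancel₀ (hz j), mul_one]
    rw [← Finset.mul_prod_erase Finset.univ (fun k => z k ^ α k) (Finset.mem_univ j), ← hzj]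
    ring
  simp only [key]
  rw [← Finset.mul_sum, ← Finset.sum_mul]
  have : ∑ j, (u j : ℂ) * (α j : ℂ) = (d : ℂ) := by
    have := hA α hα
    push_cast [← this]
    rfl
  rw [this]
  ring


/-- If `P`, `Q` are quasi-homogeneous Laurent polynomials on the torus with
degrees `d_P ≠ d_Q` with respect to a weight `u`, and the gradient of `P` does
not vanish on `P⁻¹(0) \ Q⁻¹(0)`, then `g = P/Q` has no critical points on
`(ℂ*)ⁿ \ Q⁻¹(0)`; in particular `g(Sing g) = ∅`. -/
theorem no_critical_points_quasi_homogeneous_ratio {n : ℕ} (u : Fin n → ℤ)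
    (dP dQ : ℤ) (hne : dP ≠ dQ) (A B : (Fin n → ℤ) →₀ ℂ)
    (hA : ∀ α ∈ A.support, ∑ i, u i * α i = dP)
    (hB : ∀ α ∈ B.support, ∑ i, u i * α i = dQ)
    (hgrad : ∀ z : Fin n → ℂ, (∀ i, z i ≠ 0) → levalL A z = 0 → levalL B z ≠ 0 →
      ∃ j, fderiv ℂ (levalL A) z (Pi.single j 1) ≠ 0) :
    ∀ z : Fin n → ℂ, (∀ i, z i ≠ 0) → levalL B z ≠ 0 →
      ∃ j, fderiv ℂ (fun w => levalL A w / levalL B w) z (Pi.single j 1) ≠ 0 := by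
  intro z hz hQ
  have hPd := hasFDerivAt_levalL A z hz
  have hQd := hasFDerivAt_levalL B z hz
  have hinv : HasFDerivAt (fun w => (levalL B w)⁻¹)
      ((-(levalL B z ^ 2)⁻¹) • lderivCLM B z) z :=
    (hasDerivAt_inv hQ).comp_hasFDerivAt z hQd
  have hg : HasFDerivAt (fun w => levalL A w / levalL B w)
      (levalL A z • ((-(levalL B z ^ 2)⁻¹) • lderivCLM B z) +
        (levalL B z)⁻¹ • lderivCLM A z) z := by
    simpa [div_eq_mul_inv] using hPd.fun_mul hinv
  have hfg : fderiv ℂ (fun w => levalL A w / levalL B w) z =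
      levalL A z • ((-(levalL B z ^ 2)⁻¹) • lderivCLM B z) +
        (levalL B z)⁻¹ • lderivCLM A z := hg.fderiv
  have hF : ∀ j, fderiv ℂ (fun w => levalL A w / levalL B w) z (Pi.single j 1) =
      levalL A z * (-(levalL B z ^ 2)⁻¹) * lderivCLM B z (Pi.single j 1) +
        (levalL B z)⁻¹ * lderivCLM A z (Pi.single j 1) := by
    intro j
    rw [hfg]
    simp [mul_assoc]
  by_cases hP : levalL A z = 0
  · obtain ⟨j, hj⟩ := hgrad z hz hP hQ
    rw [hPd.fderiv] at hj
    refine ⟨j, ?_⟩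
    rw [hF j, hP]
    simpa using mul_ne_zero (inv_ne_zero hQ) hj
  · by_contra hcon
    push_neg at hcon
    have hsum : ∑ j, (u j : ℂ) * z j *
        fderiv ℂ (fun w => levalL A w / levalL B w) z (Pi.single j 1) = 0 := by
      simp [hcon]
    have heulA := euler_identity A u dP hA z hz
    have heulB := euler_identity B u dQ hB z hz
    have hsum2 : ∑ j, (u j : ℂ) * z j *
        fderiv ℂ (fun w => levalL A w / levalL B w) z (Pi.single j 1) =
        ((dP : ℂ) - dQ) * (levalL A z / levalL B z) := by
      simp only [hF]
      have e1 : ∀ j : Fin n, (u j : ℂ) * z j *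
          (levalL A z * -(levalL B z ^ 2)⁻¹ * lderivCLM B z (Pi.single j 1) +
            (levalL B z)⁻¹ * lderivCLM A z (Pi.single j 1)) =
          (levalL A z * -(levalL B z ^ 2)⁻¹) * ((u j : ℂ) * z j * lderivCLM B z (Pi.single j 1)) +
            (levalL B z)⁻¹ * ((u j : ℂ) * z j * lderivCLM A z (Pi.single j 1)) := fun j => by ring
      simp only [e1]
      rw [Finset.sum_add_distrib, ← Finset.mul_sum, ← Finset.mul_sum, heulA, heulB]
      field_simp
      ring
    rw [hsum] at hsum2
    have hdne : (dP : ℂ) - dQ ≠ 0 := sub_ne_zero.mpr (by exact_mod_cast hne)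
    have := mul_ne_zero hdne (div_ne_zero hP hQ)
    exact this hsum2.symm
end

section
/- Suppose f = P/Q is a rational function on ℂ^n, h : (0,1) → ℂ^n \ Q^{-1}(0) is a curve of the form h(t) = a t^α + …, a ≠ 0, α < 0, λ : (0,1) → ℂ is analytic with grad f(h(t)) = λ(t) h(t) for all t, and f(h(t)) ≡ 0. Then λ(t) ≡ 0, and consequently grad f(h(t)) ≡ 0 along the curve. -/
open Asymptotics

/-- If `f = P/Q` is a rational function on `ℂⁿ`, `h : (0,1) → ℂⁿ \ Q⁻¹(0)` is a
curve of the form `h(t) = a t^α + …` with `a ≠ 0`, `α < 0`, `λ` is analytic with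
`grad f(h(t)) = λ(t) h(t)`, and `f(h(t)) ≡ 0`, then `λ ≡ 0` and consequently
`grad f(h(t)) ≡ 0` along the curve. -/
theorem lambda_vanishes_on_zero_fiber_curve (n : ℕ)
    (P Q : MvPolynomial (Fin n) ℂ) (h h' e e' : ℝ → Fin n → ℂ) (lam : ℝ → ℂ)
    (a : Fin n → ℂ) (ha : a ≠ 0) (α : ℝ) (hα : α < 0)
    (hQ : ∀ t ∈ Set.Ioo (0 : ℝ) 1, MvPolynomial.eval (h t) Q ≠ 0)
    (hderiv : ∀ t ∈ Set.Ioo (0 : ℝ) 1, HasDerivAt h (h' t) t)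
    (hh : ∀ t ∈ Set.Ioo (0 : ℝ) 1, ∀ i, h t i = ((t ^ α : ℝ) : ℂ) * a i + e t i)
    (hh' : ∀ t ∈ Set.Ioo (0 : ℝ) 1, ∀ i,
      h' t i = ((α * t ^ (α - 1) : ℝ) : ℂ) * a i + e' t i)
    (he : ∀ i, (fun t : ℝ => e t i) =o[nhdsWithin 0 (Set.Ioi 0)] fun t : ℝ => t ^ α)
    (he' : ∀ i, (fun t : ℝ => e' t i) =o[nhdsWithin 0 (Set.Ioi 0)]
      fun t : ℝ => t ^ (α - 1))
    (hlam : ∀ t ∈ Set.Ioo (0 : ℝ) 1, AnalyticAt ℝ lam t)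
    (hgrad : ∀ t ∈ Set.Ioo (0 : ℝ) 1, ∀ i,
      (starRingEnd ℂ)
          (fderiv ℂ (fun z => MvPolynomial.eval z P / MvPolynomial.eval z Q) (h t)
            (Pi.single i 1))
        = lam t * h t i)
    (hf0 : ∀ t ∈ Set.Ioo (0 : ℝ) 1,
      MvPolynomial.eval (h t) P / MvPolynomial.eval (h t) Q = 0) :
    ∀ t ∈ Set.Ioo (0 : ℝ) 1, lam t = 0 ∧ ∀ i,
      (starRingEnd ℂ)
          (fderiv ℂ (fun z => MvPolynomial.eval z P / MvPolynomial.eval z Q) (h t)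
            (Pi.single i 1)) = 0 := by
  classical
  set F : (Fin n → ℂ) → ℂ := fun z => MvPolynomial.eval z P / MvPolynomial.eval z Q with hFdef
  set S : ℝ → ℂ := fun t => ∑ i, h' t i * (starRingEnd ℂ) (h t i) with hSdef
  -- Step 1: the key algebraic identity λ(t) * conj(S t) = 0 on (0,1)
  have key : ∀ t ∈ Set.Ioo (0 : ℝ) 1, lam t * (starRingEnd ℂ) (S t) = 0 := by
    intro t ht
    have hPa : AnalyticAt ℂ (fun z : Fin n → ℂ => MvPolynomial.eval z P) (h t) :=
      AnalyticOnNhd.eval_mvPolynomial (𝕜 := ℂ) P _ (Set.mem_univ _)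
    have hQa : AnalyticAt ℂ (fun z : Fin n → ℂ => MvPolynomial.eval z Q) (h t) :=
      AnalyticOnNhd.eval_mvPolynomial (𝕜 := ℂ) Q _ (Set.mem_univ _)
    have hFd : DifferentiableAt ℂ F (h t) := (hPa.div hQa (hQ t ht)).differentiableAt
    have hFr : HasFDerivAt F (fderiv ℂ F (h t)) (h t) := hFd.hasFDerivAt
    have hcomp : HasDerivAt (fun s => F (h s))
        (((fderiv ℂ F (h t)).restrictScalars ℝ) (h' t)) t :=
      (hFr.restrictScalars ℝ).comp_hasDerivAt t (hderiv t ht)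
    have hzero : (fun s => F (h s)) =ᶠ[nhds t] fun _ => (0 : ℂ) := by
      filter_upwards [isOpen_Ioo.mem_nhds ht] with s hs using hf0 s hs
    have hz : HasDerivAt (fun _ : ℝ => (0 : ℂ))
        (((fderiv ℂ F (h t)).restrictScalars ℝ) (h' t)) t :=
      hcomp.congr_of_eventuallyEq hzero.symm
    have hD0 : (fderiv ℂ F (h t)) (h' t) = 0 := hz.unique (hasDerivAt_const t 0)
    have hsingle : h' t = ∑ i, h' t i • (Pi.single i 1 : Fin n → ℂ) := by
      ext j
      simp [Pi.single_apply]
    have hdecomp : (fderiv ℂ F (h t)) (h' t)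
        = ∑ i, h' t i * (fderiv ℂ F (h t)) (Pi.single i 1) := by
      conv_lhs => rw [hsingle]
      rw [map_sum]
      exact Finset.sum_congr rfl fun i _ => by rw [map_smul]; simp [smul_eq_mul]
    have hsum2 : ∑ i, h' t i * (fderiv ℂ F (h t)) (Pi.single i 1)
        = (starRingEnd ℂ) (lam t) * S t := by
      rw [hSdef, Finset.mul_sum]
      refine Finset.sum_congr rfl fun i _ => ?_
      have hLi : (fderiv ℂ F (h t)) (Pi.single i 1)
          = (starRingEnd ℂ) (lam t * h t i) := by
        rw [← hgrad t ht i, Complex.conj_conj]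
      rw [hLi, map_mul]
      ring
    have h0 : (starRingEnd ℂ) (lam t) * S t = 0 := by
      rw [← hsum2, ← hdecomp, hD0]
    have := congrArg (starRingEnd ℂ) h0
    simpa [map_mul] using this
  -- Step 2: asymptotics — S t ≠ 0 near 0⁺.
  set c : ℝ := ∑ i, Complex.normSq (a i) with hcdef
  have hc_pos : 0 < c := by
    obtain ⟨i, hi⟩ := Function.ne_iff.mp ha
    exact Finset.sum_pos' (fun j _ => Complex.normSq_nonneg _)
      ⟨i, Finset.mem_univ i, by simpa [Complex.normSq_pos] using hi⟩
  have hrpow : ∀ t : ℝ, 0 < t → t ^ (α - 1) * t ^ α = t ^ (2 * α - 1) := by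
    intro t ht
    rw [← Real.rpow_add ht]
    congr 1
    ring
  set T : Fin n → ℝ → ℂ := fun i t =>
    ((α * t ^ (α - 1) : ℝ) : ℂ) * a i * (starRingEnd ℂ) (e t i)
      + e' t i * (((t ^ α : ℝ) : ℂ) * (starRingEnd ℂ) (a i))
      + e' t i * (starRingEnd ℂ) (e t i) with hTdef
  have hconj : ∀ (u : ℝ → ℂ) (v : ℝ → ℝ),
      u =o[nhdsWithin 0 (Set.Ioi 0)] v →
      (fun t => (starRingEnd ℂ) (u t)) =o[nhdsWithin 0 (Set.Ioi 0)] v := by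
    intro u v hu
    refine IsLittleO.of_norm_left ?_
    simpa [RCLike.norm_conj] using hu.norm_left
  have hmul_eq : (fun t : ℝ => t ^ (α - 1) * t ^ α)
      =ᶠ[nhdsWithin 0 (Set.Ioi 0)] fun t => t ^ (2 * α - 1) := by
    filter_upwards [self_mem_nhdsWithin] with t ht
    exact hrpow t ht
  have hT : ∀ i, (fun t => T i t) =o[nhdsWithin 0 (Set.Ioi 0)]
      fun t : ℝ => t ^ (2 * α - 1) := by
    intro i
    have h1 : (fun t : ℝ => ((α * t ^ (α - 1) : ℝ) : ℂ) * a i)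
        =O[nhdsWithin 0 (Set.Ioi 0)] fun t => t ^ (α - 1) := by
      refine IsBigO.of_bound (|α| * ‖a i‖) (Filter.Eventually.of_forall fun t => ?_)
      rw [norm_mul, Complex.norm_real, Real.norm_eq_abs, Real.norm_eq_abs, abs_mul]
      exact le_of_eq (by ring)
    have h2 : (fun t : ℝ => ((t ^ α : ℝ) : ℂ) * (starRingEnd ℂ) (a i))
        =O[nhdsWithin 0 (Set.Ioi 0)] fun t => t ^ α := by
      refine IsBigO.of_bound ‖a i‖ (Filter.Eventually.of_forall fun t => ?_)
      rw [norm_mul, Complex.norm_real, Real.norm_eq_abs, RCLike.norm_conj]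
      exact le_of_eq (mul_comm _ _)
    have term1 : (fun t : ℝ => ((α * t ^ (α - 1) : ℝ) : ℂ) * a i * (starRingEnd ℂ) (e t i))
        =o[nhdsWithin 0 (Set.Ioi 0)] fun t => t ^ (2 * α - 1) :=
      (h1.mul_isLittleO (hconj _ _ (he i))).congr' Filter.EventuallyEq.rfl hmul_eq
    have term2 : (fun t : ℝ => e' t i * (((t ^ α : ℝ) : ℂ) * (starRingEnd ℂ) (a i)))
        =o[nhdsWithin 0 (Set.Ioi 0)] fun t => t ^ (2 * α - 1) :=
      ((he' i).mul_isBigO h2).congr' Filter.EventuallyEq.rfl hmul_eq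
    have term3 : (fun t : ℝ => e' t i * (starRingEnd ℂ) (e t i))
        =o[nhdsWithin 0 (Set.Ioi 0)] fun t => t ^ (2 * α - 1) :=
      ((he' i).mul_isBigO (hconj _ _ (he i)).isBigO).congr' Filter.EventuallyEq.rfl hmul_eq
    simpa [hTdef, add_assoc] using (term1.add term2).add term3
  have hTsum : (fun t : ℝ => ∑ i, T i t) =o[nhdsWithin 0 (Set.Ioi 0)]
      fun t : ℝ => t ^ (2 * α - 1) :=
    IsLittleO.fun_sum fun i _ => hT i
  have hpt : ∀ t : ℝ, 0 < t → ∀ i,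
      (((α * t ^ (α - 1) : ℝ) : ℂ) * a i + e' t i)
          * (starRingEnd ℂ) (((t ^ α : ℝ) : ℂ) * a i + e t i)
        = ((α * t ^ (2 * α - 1) : ℝ) : ℂ) * (Complex.normSq (a i) : ℂ) + T i t := by
    intro t ht i
    have hcr : ((α * t ^ (α - 1) : ℝ) : ℂ) * ((t ^ α : ℝ) : ℂ)
        = ((α * t ^ (2 * α - 1) : ℝ) : ℂ) := by
      rw [← Complex.ofReal_mul, mul_assoc, hrpow t ht]
    simp only [hTdef, map_add, map_mul, Complex.conj_ofReal]
    rw [← Complex.mul_conj]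
    linear_combination (a i * (starRingEnd ℂ) (a i)) * hcr
  have heq : (fun t : ℝ => S t - ((α * t ^ (2 * α - 1) * c : ℝ) : ℂ))
      =ᶠ[nhdsWithin 0 (Set.Ioi 0)] fun t => ∑ i, T i t := by
    filter_upwards [Ioo_mem_nhdsGT_of_mem
      (Set.mem_Ico.mpr ⟨le_refl (0 : ℝ), (zero_lt_one : (0:ℝ) < 1)⟩)] with t ht
    have hSt : S t = ((α * t ^ (2 * α - 1) * c : ℝ) : ℂ) + ∑ i, T i t := by
      simp only [hSdef]
      have : ∀ i, h' t i * (starRingEnd ℂ) (h t i)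
          = ((α * t ^ (2 * α - 1) : ℝ) : ℂ) * (Complex.normSq (a i) : ℂ) + T i t := by
        intro i
        rw [hh t ht i, hh' t ht i]
        exact hpt t ht.1 i
      rw [Finset.sum_congr rfl fun i _ => this i, Finset.sum_add_distrib,
        ← Finset.mul_sum]
      congr 1
      rw [hcdef]
      push_cast
      ring
    rw [hSt]
    ring
  have hlittle : (fun t : ℝ => S t - ((α * t ^ (2 * α - 1) * c : ℝ) : ℂ))
      =o[nhdsWithin 0 (Set.Ioi 0)] fun t : ℝ => t ^ (2 * α - 1) :=
    hTsum.congr' heq.symm Filter.EventuallyEq.rfl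
  have hSne : ∀ᶠ t in nhdsWithin 0 (Set.Ioi 0), S t ≠ 0 := by
    have hb := hlittle.def (show (0 : ℝ) < |α| * c / 2 by have hap : 0 < |α| := abs_pos.mpr (ne_of_lt hα); positivity)
    filter_upwards [hb, self_mem_nhdsWithin] with t hbt (ht : 0 < t)
    intro hS0
    rw [hS0, zero_sub, norm_neg] at hbt
    have hpow : 0 < t ^ (2 * α - 1) := Real.rpow_pos_of_pos ht _
    rw [Complex.norm_real, Real.norm_eq_abs, Real.norm_eq_abs, abs_mul, abs_mul,
      abs_of_pos hpow, abs_of_pos hc_pos] at hbt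
    have hap : 0 < |α| := abs_pos.mpr (ne_of_lt hα)
    nlinarith [mul_pos (mul_pos hap hc_pos) hpow]
  obtain ⟨u, hu, hsub⟩ := mem_nhdsGT_iff_exists_Ioo_subset.mp hSne
  have hu0 : (0 : ℝ) < u := hu
  set δ : ℝ := min u 1 with hδdef
  have hδ0 : 0 < δ := lt_min hu0 zero_lt_one
  have hδ1 : δ ≤ 1 := min_le_right _ _
  have hlamzero : ∀ s ∈ Set.Ioo 0 δ, lam s = 0 := by
    intro s hs
    have hs1 : s ∈ Set.Ioo (0 : ℝ) 1 := ⟨hs.1, lt_of_lt_of_le hs.2 hδ1⟩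
    have hSs : S s ≠ 0 := hsub ⟨hs.1, lt_of_lt_of_le hs.2 (min_le_left _ _)⟩
    have := key s hs1
    rcases mul_eq_zero.mp this with h0 | h0
    · exact h0
    · exact absurd (by simpa using h0) hSs
  -- Step 3: identity theorem
  have hanal : AnalyticOnNhd ℝ lam (Set.Ioo 0 1) := fun t ht => hlam t ht
  have ht₀ : δ / 2 ∈ Set.Ioo (0 : ℝ) 1 :=
    ⟨by positivity, lt_of_lt_of_le (by linarith) hδ1⟩
  have hev : lam =ᶠ[nhds (δ / 2)] 0 := by
    filter_upwards [isOpen_Ioo.mem_nhds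
      (show δ / 2 ∈ Set.Ioo (0 : ℝ) δ from ⟨by positivity, by linarith⟩)] with s hs
    exact hlamzero s hs
  have hEq : Set.EqOn lam 0 (Set.Ioo 0 1) :=
    hanal.eqOn_zero_of_preconnected_of_eventuallyEq_zero isPreconnected_Ioo ht₀ hev
  intro t ht
  have hl0 : lam t = 0 := hEq ht
  refine ⟨hl0, fun i => ?_⟩
  rw [hgrad t ht i, hl0, zero_mul]
end
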